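/- Given L ≥ 1, real parameters J_u > 0, η > 0, A > 0, 0 < α < 1, ordered nodes 0 < θ_1 < θ_2 < … < θ_L and positive weights μ_1, …, μ_L > 0, set γ_ℓ = (2 sin(πα)/(π J_u)) θ_ℓ^{1−2α} and Υ_ℓ = A Γ(1+α) γ_ℓ, and let S be the (L+2)×(L+2) real matrix whose row 0 and column 0 are zero and whose remaining entries are S(1,1) = −1/(J_u η), S(1,1+ℓ) = −A Γ(1+α) μ_ℓ / J_u, S(1+ℓ,1) = −γ_ℓ/η, and S(1+ℓ,1+j) = −Υ_ℓ μ_j − θ_ℓ² δ_{ℓj}. Let ϱ(S) denote the spectral radius of S, i.e. the maximum of |λ| over all (complex) eigenvalues λ of S. Then max( θ_L² , 1/(J_u η) + ∑_{ℓ=1}^L μ_ℓ Υ_ℓ ) ≤ ϱ(S) ≤ θ_L² + 1/(J_u η) + ∑_{ℓ=1}^L μ_ℓ Υ_ℓ. -/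

import Mathlib

open Matrix Polynomial in
lemma aux_eval_charpoly {n : Type*} [Fintype n] [DecidableEq n] {R : Type*} [CommRing R]
    (M : Matrix n n R) (z : R) :
    M.charpoly.eval z = (Matrix.scalar n z - M).det := by
  rw [Matrix.charpoly, eval_det, matPolyEquiv_charmatrix]
  simp

open Matrix Polynomial in
lemma aux_root_iff_eig {n : Type*} [Fintype n] [DecidableEq n]
    (M : Matrix n n ℂ) (z : ℂ) :
    M.charpoly.IsRoot z ↔ ∃ v, v ≠ 0 ∧ M *ᵥ v = z • v := by
  rw [Polynomial.IsRoot, aux_eval_charpoly, ← Matrix.exists_mulVec_eq_zero_iff]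
  constructor
  · rintro ⟨v, hv, h⟩
    refine ⟨v, hv, ?_⟩
    have : Matrix.scalar n z *ᵥ v - M *ᵥ v = 0 := by rwa [← Matrix.sub_mulVec]
    have h2 : Matrix.scalar n z *ᵥ v = z • v := by
      ext i; simp [Matrix.scalar, Matrix.mulVec, dotProduct, Matrix.diagonal]
    rw [h2] at this
    rw [sub_eq_zero] at this
    exact this.symm
  · rintro ⟨v, hv, h⟩
    refine ⟨v, hv, ?_⟩
    have h2 : Matrix.scalar n z *ᵥ v = z • v := by
      ext i; simp [Matrix.scalar, Matrix.mulVec, dotProduct, Matrix.diagonal]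
    rw [Matrix.sub_mulVec, h2, h, sub_self]

open Matrix in
lemma aux_rayleigh {m : Type*} [Fintype m] [DecidableEq m] [Nonempty m]
    (N : Matrix m m ℝ) (hN : N.IsHermitian) (x : m → ℝ) :
    x ⬝ᵥ (N *ᵥ x) ≤ (Finset.univ.sup' Finset.univ_nonempty hN.eigenvalues) * (x ⬝ᵥ x) := by
  set U : Matrix m m ℝ := (hN.eigenvectorUnitary : Matrix m m ℝ) with hU
  set y : m → ℝ := star U *ᵥ x with hy
  have hspec := hN.spectral_theorem
  have hdiag : (Matrix.diagonal (RCLike.ofReal ∘ hN.eigenvalues) : Matrix m m ℝ)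
      = Matrix.diagonal hN.eigenvalues := by
    congr 1
  have h1 : x ⬝ᵥ (N *ᵥ x) = ∑ i, hN.eigenvalues i * (y i)^2 := by
    calc x ⬝ᵥ (N *ᵥ x)
        = x ⬝ᵥ ((U * (Matrix.diagonal hN.eigenvalues * star U)) *ᵥ x) := by
          rw [← hdiag, ← Matrix.mul_assoc]; exact congrArg (fun M => x ⬝ᵥ M *ᵥ x) hspec
      _ = (x ᵥ* U) ⬝ᵥ ((Matrix.diagonal hN.eigenvalues) *ᵥ y) := by
          rw [← Matrix.mulVec_mulVec, Matrix.dotProduct_mulVec, ← Matrix.mulVec_mulVec]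
      _ = ∑ i, hN.eigenvalues i * (y i)^2 := by
          have hxU : x ᵥ* U = y := by rw [hy, ← Matrix.mulVec_transpose]; rfl
          rw [hxU]
          simp [dotProduct, Matrix.mulVec_diagonal, sq]
          exact Finset.sum_congr rfl fun i _ => by ring
  have h2 : x ⬝ᵥ x = ∑ i, (y i)^2 := by
    have hUU : U * star U = 1 := (Matrix.mem_unitaryGroup_iff).mp hN.eigenvectorUnitary.2
    calc x ⬝ᵥ x = x ⬝ᵥ ((U * star U) *ᵥ x) := by rw [hUU, Matrix.one_mulVec]
      _ = (x ᵥ* U) ⬝ᵥ y := by rw [← Matrix.mulVec_mulVec, Matrix.dotProduct_mulVec]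
      _ = ∑ i, (y i)^2 := by
          have hxU : x ᵥ* U = y := by rw [hy, ← Matrix.mulVec_transpose]; rfl
          rw [hxU]; simp [dotProduct, sq]
  rw [h1, h2, Finset.mul_sum]
  apply Finset.sum_le_sum
  intro i _
  have := Finset.le_sup' hN.eigenvalues (Finset.mem_univ i)
  nlinarith [sq_nonneg (y i)]

open Matrix in
set_option maxHeartbeats 2000000 in
theorem stmt_4 (L : ℕ) (hL : 1 ≤ L) (Ju η A α : ℝ) (hJ : 0 < Ju) (hη : 0 < η) (hA : 0 < A)
    (hα0 : 0 < α) (hα1 : α < 1)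
    (θ μ γ Υ : Fin L → ℝ) (hθ : ∀ ℓ, 0 < θ ℓ) (hmono : StrictMono θ) (hμ : ∀ ℓ, 0 < μ ℓ)
    (hγ : ∀ ℓ, γ ℓ = (2 * Real.sin (Real.pi * α) / (Real.pi * Ju)) * θ ℓ ^ (1 - 2 * α))
    (hΥ : ∀ ℓ, Υ ℓ = A * Real.Gamma (1 + α) * γ ℓ)
    (S : Matrix (Fin (L + 2)) (Fin (L + 2)) ℝ)
    (hS : ∀ i j : Fin (L + 2), S i j =
      if (i : ℕ) = 0 ∨ (j : ℕ) = 0 then 0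
      else if (i : ℕ) = 1 ∧ (j : ℕ) = 1 then -1 / (Ju * η)
      else if h : (i : ℕ) = 1 ∧ 2 ≤ (j : ℕ) then
        -A * Real.Gamma (1 + α) * μ ⟨(j : ℕ) - 2, by have := j.isLt; omega⟩ / Ju
      else if h : 2 ≤ (i : ℕ) ∧ (j : ℕ) = 1 then
        -γ ⟨(i : ℕ) - 2, by have := i.isLt; omega⟩ / η
      else if h : 2 ≤ (i : ℕ) ∧ 2 ≤ (j : ℕ) then
        -Υ ⟨(i : ℕ) - 2, by have := i.isLt; omega⟩ * μ ⟨(j : ℕ) - 2, by have := j.isLt; omega⟩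
          - (θ ⟨(i : ℕ) - 2, by have := i.isLt; omega⟩) ^ 2 * (if i = j then 1 else 0)
      else 0) :
    ∀ r : ℝ,
      (∀ z ∈ ((S.map (Complex.ofReal)).charpoly).roots, ‖z‖ ≤ r) →
      (∃ z ∈ ((S.map (Complex.ofReal)).charpoly).roots, ‖z‖ = r) →
      max ((θ ⟨L - 1, by omega⟩) ^ 2) (1 / (Ju * η) + ∑ ℓ : Fin L, μ ℓ * Υ ℓ) ≤ r ∧
        r ≤ (θ ⟨L - 1, by omega⟩) ^ 2 + 1 / (Ju * η) + ∑ ℓ : Fin L, μ ℓ * Υ ℓ := by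
  -- ======== basic positivity ========
  have hπ := Real.pi_pos
  have hK : 0 < A * Real.Gamma (1 + α) := mul_pos hA (Real.Gamma_pos_of_pos (by linarith))
  have hsin : 0 < Real.sin (Real.pi * α) :=
    Real.sin_pos_of_pos_of_lt_pi (by positivity) (by nlinarith)
  have hγp : ∀ ℓ, 0 < γ ℓ := by
    intro ℓ; rw [hγ ℓ]
    have := hθ ℓ
    positivity
  have hΥp : ∀ ℓ, 0 < Υ ℓ := by
    intro ℓ; rw [hΥ ℓ]; exact mul_pos hK (hγp ℓ)
  set κ : Fin L := ⟨L - 1, by omega⟩ with hκ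
  have hθκ : ∀ ℓ, θ ℓ ≤ θ κ := by
    intro ℓ
    apply hmono.monotone
    rw [hκ, Fin.le_def]
    show (ℓ:ℕ) ≤ L - 1
    have := ℓ.isLt; omega
  -- ======== definitions ========
  set idx : Fin (L+2) → Fin L := fun i => ⟨i.1 - 2, by have := i.isLt; omega⟩ with hidx
  set u : Fin (L+2) → ℝ := fun i => if i.1 = 0 then 0 else if i.1 = 1 then 1/Ju else γ (idx i) with hu
  set v : Fin (L+2) → ℝ := fun i => if i.1 = 0 then 0 else if i.1 = 1 then 1/η
    else (A * Real.Gamma (1+α)) * μ (idx i) with hv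
  set d : Fin (L+2) → ℝ := fun i => if i.1 ≤ 1 then 0 else θ (idx i)^2 with hd
  have hu0 : ∀ i : Fin (L+2), (i:ℕ) = 0 → u i = 0 := by
    intro i h; rw [hu]; simp only [h]; norm_num
  have hu1 : ∀ i : Fin (L+2), (i:ℕ) = 1 → u i = 1/Ju := by
    intro i h; rw [hu]; simp only [h]; norm_num
  have hu2 : ∀ i : Fin (L+2), 2 ≤ (i:ℕ) → u i = γ (idx i) := by
    intro i h; rw [hu]; dsimp only; rw [if_neg (by omega), if_neg (by omega)]
  have hv0 : ∀ i : Fin (L+2), (i:ℕ) = 0 → v i = 0 := by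
    intro i h; rw [hv]; simp only [h]; norm_num
  have hv1 : ∀ i : Fin (L+2), (i:ℕ) = 1 → v i = 1/η := by
    intro i h; rw [hv]; simp only [h]; norm_num
  have hv2 : ∀ i : Fin (L+2), 2 ≤ (i:ℕ) → v i = (A * Real.Gamma (1+α)) * μ (idx i) := by
    intro i h; rw [hv]; dsimp only; rw [if_neg (by omega), if_neg (by omega)]
  have hd01 : ∀ i : Fin (L+2), (i:ℕ) ≤ 1 → d i = 0 := by
    intro i h; rw [hd]; dsimp only; rw [if_pos h]
  have hd2 : ∀ i : Fin (L+2), 2 ≤ (i:ℕ) → d i = θ (idx i)^2 := by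
    intro i h; rw [hd]; dsimp only; rw [if_neg (by omega)]
  have huvnn : ∀ i, 0 ≤ u i * v i := by
    intro i
    rcases Nat.lt_or_ge (i:ℕ) 2 with h | h
    · rcases Nat.lt_or_ge (i:ℕ) 1 with h0 | h1
      · rw [hu0 i (by omega)]; norm_num
      · rw [hu1 i (by omega), hv1 i (by omega)]; positivity
    · rw [hu2 i h, hv2 i h]
      have := hγp (idx i); have := hμ (idx i); positivity
  have huvpos : ∀ i : Fin (L+2), (i:ℕ) ≠ 0 → 0 < u i ∧ 0 < v i := by
    intro i hi
    rcases Nat.lt_or_ge (i:ℕ) 2 with h | h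
    · rw [hu1 i (by omega), hv1 i (by omega)]
      constructor <;> positivity
    · rw [hu2 i h, hv2 i h]
      exact ⟨hγp _, mul_pos hK (hμ _)⟩
  have hdnn : ∀ i, 0 ≤ d i := by
    intro i
    rcases Nat.lt_or_ge (i:ℕ) 2 with h | h
    · rw [hd01 i (by omega)]
    · rw [hd2 i h]; positivity
  have hdκ : ∀ i, d i ≤ θ κ ^ 2 := by
    intro i
    rcases Nat.lt_or_ge (i:ℕ) 2 with h | h
    · rw [hd01 i (by omega)]; positivity
    · rw [hd2 i h]; exact pow_le_pow_left₀ (hθ _).le (hθκ _) 2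
  -- ======== structure of S ========
  have hSuv : ∀ i j, S i j = -(u i * v j) - (if i = j then d i else 0) := by
    intro i j
    rw [hS i j]
    by_cases hi0 : (i:ℕ) = 0
    · rw [if_pos (Or.inl hi0), hu0 i hi0]
      split_ifs with h
      · rw [hd01 i (by omega)]; ring
      · ring
    by_cases hj0 : (j:ℕ) = 0
    · rw [if_pos (Or.inr hj0), hv0 j hj0]
      split_ifs with h
      · rw [hd01 i (by rw [h]; omega)]; ring
      · ring
    rw [if_neg (by omega)]
    by_cases hi1 : (i:ℕ) = 1 <;> by_cases hj1 : (j:ℕ) = 1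
    · rw [if_pos ⟨hi1, hj1⟩, hu1 i hi1, hv1 j hj1,
        if_pos (Fin.ext (by omega) : i = j), hd01 i (by omega)]
      field_simp
      ring
    · rw [if_neg (by omega), dif_pos ⟨hi1, by omega⟩, hu1 i hi1, hv2 j (by omega),
        if_neg (fun h : i = j => by rw [h] at hi1; omega)]
      rw [hidx]
      ring
    · rw [if_neg (by omega), dif_neg (by omega), dif_pos ⟨by omega, hj1⟩,
        hu2 i (by omega), hv1 j hj1,
        if_neg (fun h : i = j => by rw [h] at hi1; exact hi1 hj1)]
      rw [hidx]
      ring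
    · rw [if_neg (by omega), dif_neg (by omega), dif_neg (by omega),
        dif_pos ⟨by omega, by omega⟩, hu2 i (by omega), hv2 j (by omega),
        hd2 i (by omega), hΥ]
      rw [hidx]
      split_ifs with h
      · ring
      · ring
  -- ======== symmetrization data ========
  set w : Fin (L+2) → ℝ := fun i => Real.sqrt (u i * v i) with hwdef
  have hwnn : ∀ i, 0 ≤ w i := fun i => Real.sqrt_nonneg _
  have hwsq : ∀ i, w i ^ 2 = u i * v i := fun i => Real.sq_sqrt (huvnn i)
  set e : Fin (L+2) → ℝ := fun i => if (i:ℕ) = 0 then 1 else Real.sqrt (v i / u i) with hedef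
  have hepos : ∀ i, 0 < e i := by
    intro i; rw [hedef]; dsimp only; split_ifs with h
    · norm_num
    · obtain ⟨h1, h2⟩ := huvpos i h
      positivity
  have hue : ∀ i, e i * u i = w i := by
    intro i; rw [hedef, hwdef]; dsimp only; split_ifs with h
    · rw [hu0 i h]; simp
    · obtain ⟨h1, h2⟩ := huvpos i h
      rw [← Real.sqrt_sq (by positivity : (0:ℝ) ≤ Real.sqrt (v i / u i) * u i)]
      congr 1
      rw [mul_pow, Real.sq_sqrt (by positivity)]
      field_simp
  have hwe : ∀ i, w i * e i = v i := by
    intro i; rw [hedef, hwdef]; dsimp only; split_ifs with h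
    · rw [hu0 i h, hv0 i h]; simp
    · obtain ⟨h1, h2⟩ := huvpos i h
      rw [← Real.sqrt_mul (huvnn i),
        show u i * v i * (v i / u i) = (v i)^2 by field_simp,
        Real.sqrt_sq h2.le]
  set N : Matrix (Fin (L+2)) (Fin (L+2)) ℝ :=
    Matrix.of (fun i j => w i * w j + (if i = j then d i else 0)) with hNdef
  have hNapp : ∀ i j, N i j = w i * w j + (if i = j then d i else 0) := fun i j => rfl
  have hNherm : N.IsHermitian := by
    show N.conjTranspose = N
    ext i j
    rw [Matrix.conjTranspose_apply, hNapp, hNapp, star_trivial]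
    by_cases h : i = j
    · subst h; ring
    · rw [if_neg h, if_neg (fun hc => h hc.symm)]
      ring
  have hNS : ∀ i j, e i * S i j = -(N i j * e j) := by
    intro i j
    rw [hSuv i j, hNapp i j]
    split_ifs with h
    · subst h
      linear_combination (-(v i)) * (hue i) + (w i) * (hwe i)
    · linear_combination (-(v j)) * (hue i) + (w i) * (hwe j)
  -- ======== the sum identity ========
  have hsumuv : ∑ i, u i * v i = 1/(Ju*η) + ∑ ℓ : Fin L, μ ℓ * Υ ℓ := by
    rw [Fin.sum_univ_succ, Fin.sum_univ_succ]
    have h0 : u 0 * v 0 = 0 := by rw [hu0 0 rfl]; ring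
    have h1 : u ((0 : Fin (L+1)).succ) * v ((0 : Fin (L+1)).succ) = 1/(Ju*η) := by
      rw [hu1 _ rfl, hv1 _ rfl]; field_simp
    rw [h0, h1]
    have h2 : ∀ ℓ : Fin L, u (ℓ.succ.succ) * v (ℓ.succ.succ) = μ ℓ * Υ ℓ := by
      intro ℓ
      have hval : ((ℓ.succ.succ : Fin (L+2)) : ℕ) = (ℓ:ℕ) + 2 := by simp
      have hidxℓ : idx (ℓ.succ.succ) = ℓ := by
        rw [hidx]; ext; simp
      rw [hu2 _ (by omega), hv2 _ (by omega), hidxℓ, hΥ]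
      ring
    rw [Finset.sum_congr rfl (fun ℓ _ => h2 ℓ)]
    ring
  set Ttot : ℝ := ∑ i, u i * v i with hTtot
  have hTpos : 0 < Ttot := by
    rw [hsumuv]
    have : 0 < ∑ ℓ : Fin L, μ ℓ * Υ ℓ :=
      Finset.sum_pos (fun ℓ _ => mul_pos (hμ ℓ) (hΥp ℓ)) ⟨⟨0, by omega⟩, Finset.mem_univ _⟩
    positivity
  have hWtot : ∑ i, w i ^ 2 = Ttot := by
    rw [hTtot]
    exact Finset.sum_congr rfl fun i _ => hwsq i
  -- ======== begin main argument ========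
  intro r hub hatt
  show max (θ κ ^ 2) (1 / (Ju * η) + ∑ ℓ : Fin L, μ ℓ * Υ ℓ) ≤ r ∧
    r ≤ θ κ ^ 2 + 1 / (Ju * η) + ∑ ℓ : Fin L, μ ℓ * Υ ℓ
  have hcp0 : (S.map (Complex.ofReal)).charpoly ≠ 0 := (Matrix.charpoly_monic _).ne_zero
  have hroot_of : ∀ (lam : ℝ) (x : Fin (L+2) → ℝ), x ≠ 0 → S *ᵥ x = lam • x →
      ((lam : ℂ) ∈ (S.map (Complex.ofReal)).charpoly.roots) := by
    intro lam x hx heq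
    rw [Polynomial.mem_roots']
    refine ⟨hcp0, ?_⟩
    rw [aux_root_iff_eig]
    refine ⟨fun i => (x i : ℂ), ?_, ?_⟩
    · intro hcon
      apply hx
      funext i
      have h7 := congrFun hcon i
      rw [Pi.zero_apply] at h7 ⊢
      exact_mod_cast h7
    · funext i
      have hre := congrFun heq i
      simp only [Matrix.mulVec, dotProduct, Pi.smul_apply, smul_eq_mul] at hre ⊢
      simp only [Matrix.map_apply]
      have := congrArg (fun t : ℝ => (t:ℂ)) hre
      push_cast at this
      exact this
  -- each -eigenvalue of N is a root
  have hlamroot : ∀ jj : Fin (L+2),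
      ((-(hNherm.eigenvalues jj) : ℝ) : ℂ) ∈ (S.map Complex.ofReal).charpoly.roots := by
    intro jj
    set b : Fin (L+2) → ℝ := ⇑(hNherm.eigenvectorBasis jj) with hb
    have hNb : N *ᵥ b = hNherm.eigenvalues jj • b := hNherm.mulVec_eigenvectorBasis jj
    have hbne : b ≠ 0 := by
      intro hcon
      apply hNherm.eigenvectorBasis.orthonormal.ne_zero jj
      ext i
      exact congrFun hcon i
    apply hroot_of _ (fun i => b i / e i)
    · intro hcon
      apply hbne
      funext i
      have := congrFun hcon i
      simp only [Pi.zero_apply] at this ⊢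
      have := div_eq_zero_iff.mp this
      rcases this with h | h
      · exact h
      · exact absurd h (hepos i).ne'
    · funext i0
      have lhs : e i0 * ((S *ᵥ fun i => b i / e i) i0) = -((N *ᵥ b) i0) := by
        simp only [Matrix.mulVec, dotProduct]
        rw [Finset.mul_sum, ← Finset.sum_neg_distrib]
        apply Finset.sum_congr rfl
        intro k _
        rw [← mul_assoc, hNS i0 k]
        have h8 : b k / e k * e k = b k := div_mul_cancel₀ _ (hepos k).ne'
        linear_combination (-(N i0 k)) * h8
      have rhs : (N *ᵥ b) i0 = hNherm.eigenvalues jj * b i0 := by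
        rw [hNb]; rfl
      apply mul_left_cancel₀ (hepos i0).ne'
      rw [lhs, rhs]
      simp only [Pi.smul_apply, smul_eq_mul]
      have h9 : b i0 / e i0 * e i0 = b i0 := div_mul_cancel₀ _ (hepos i0).ne'
      linear_combination (hNherm.eigenvalues jj) * h9
  have hlam_le : ∀ jj, hNherm.eigenvalues jj ≤ r := by
    intro jj
    have h := hub _ (hlamroot jj)
    calc hNherm.eigenvalues jj ≤ |hNherm.eigenvalues jj| := le_abs_self _
      _ = ‖((-(hNherm.eigenvalues jj) : ℝ) : ℂ)‖ := by
          rw [Complex.norm_real, Real.norm_eq_abs, abs_neg]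
      _ ≤ r := h
  set mxx := Finset.univ.sup' Finset.univ_nonempty hNherm.eigenvalues with hmxx
  have hmx_r : mxx ≤ r := Finset.sup'_le _ _ fun jj _ => hlam_le jj
  -- Rayleigh lower bounds
  have h1 : θ κ ^ 2 ≤ mxx := by
    set iL : Fin (L+2) := ⟨L+1, by omega⟩ with hiL
    have hray := aux_rayleigh N hNherm (Pi.single iL 1)
    have hAA : (Pi.single iL 1 : Fin (L+2) → ℝ) ⬝ᵥ (N *ᵥ Pi.single iL 1) = N iL iL := by
      simp [Matrix.mulVec, dotProduct, Pi.single_apply, Finset.sum_ite_eq,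
        Finset.mul_sum, mul_ite]
    have hBB : (Pi.single iL 1 : Fin (L+2) → ℝ) ⬝ᵥ Pi.single iL 1 = 1 := by
      simp [dotProduct, Pi.single_apply]
    rw [hAA, hBB, mul_one] at hray
    refine le_trans ?_ hray
    have hidxL : idx iL = κ := by
      ext
      show L + 1 - 2 = L - 1
      omega
    rw [hNapp iL iL, if_pos rfl, hd2 iL (by show 2 ≤ L + 1; omega), hidxL]
    nlinarith [hwsq iL, huvnn iL]
  have h2 : Ttot ≤ mxx := by
    have hray := aux_rayleigh N hNherm w
    have hrow : ∀ i, (N *ᵥ w) i = w i * Ttot + d i * w i := by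
      intro i
      simp only [Matrix.mulVec, dotProduct, hNapp]
      rw [Finset.sum_congr rfl (fun k _ => show (w i * w k + if i = k then d i else 0) * w k
            = w i * w k ^ 2 + (if i = k then d i * w k else 0) by split_ifs <;> ring),
        Finset.sum_add_distrib, ← Finset.mul_sum, hWtot, Finset.sum_ite_eq,
        if_pos (Finset.mem_univ i)]
    have hdot : w ⬝ᵥ (N *ᵥ w) = Ttot^2 + ∑ i, d i * (w i)^2 := by
      simp only [dotProduct, hrow]
      rw [Finset.sum_congr rfl (fun i _ => show w i * (w i * Ttot + d i * w i)
          = (w i ^ 2) * Ttot + d i * (w i)^2 by ring), Finset.sum_add_distrib,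
        ← Finset.sum_mul, hWtot]
      ring
    have hdot2 : w ⬝ᵥ w = Ttot := by
      rw [← hWtot]
      simp only [dotProduct]
      exact Finset.sum_congr rfl fun i _ => (sq (w i)).symm
    rw [hdot, hdot2] at hray
    have hsum_nn : 0 ≤ ∑ i, d i * (w i)^2 :=
      Finset.sum_nonneg fun i _ => mul_nonneg (hdnn i) (sq_nonneg _)
    nlinarith
  constructor
  · apply max_le
    · exact h1.trans hmx_r
    · rw [← hsumuv]
      exact h2.trans hmx_r
  -- ======== upper bound ========
  · obtain ⟨z0, hz0mem, hz0abs⟩ := hatt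
    have hz0root : (S.map Complex.ofReal).charpoly.IsRoot z0 := (Polynomial.mem_roots'.mp hz0mem).2
    obtain ⟨x, hxne, hxeq⟩ := (aux_root_iff_eig _ z0).mp hz0root
    set y : Fin (L+2) → ℂ := fun i => (e i : ℂ) * x i with hy
    have hyne : ∃ i, y i ≠ 0 := by
      have hex : ∃ i, x i ≠ 0 := by
        by_contra hcon
        push_neg at hcon
        exact hxne (funext fun i => hcon i)
      obtain ⟨i, hi⟩ := hex
      refine ⟨i, ?_⟩
      rw [hy]
      exact mul_ne_zero (by exact_mod_cast (hepos i).ne') hi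
    have hNy : ∀ i, (∑ k, ((N i k : ℝ) : ℂ) * y k) = (-z0) * y i := by
      intro i
      have hxi := congrFun hxeq i
      simp only [Matrix.mulVec, dotProduct, Matrix.map_apply, Pi.smul_apply,
        smul_eq_mul] at hxi
      calc ∑ k, ((N i k : ℝ) : ℂ) * y k
          = ∑ k, -((e i : ℂ) * ((S i k : ℝ) : ℂ) * x k) := by
            apply Finset.sum_congr rfl
            intro k _
            have hc : ((e i : ℂ)) * ((S i k : ℝ):ℂ) = -(((N i k :ℝ):ℂ) * ((e k:ℝ):ℂ)) := by
              have hcc := congrArg (fun s : ℝ => (s:ℂ)) (hNS i k)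
              push_cast at hcc
              exact_mod_cast hcc
            rw [hy]
            dsimp only
            linear_combination (x k) * hc
        _ = -((e i : ℂ) * ∑ k, ((S i k : ℝ):ℂ) * x k) := by
            rw [Finset.mul_sum, ← Finset.sum_neg_distrib]
            apply Finset.sum_congr rfl
            intro k _
            ring
        _ = -((e i : ℂ) * (z0 * x i)) := by rw [hxi]
        _ = (-z0) * y i := by rw [hy]; dsimp only; ring
    set t : ℝ := ∑ i, Complex.normSq (y i) with ht
    have htpos : 0 < t := by
      obtain ⟨i, hi⟩ := hyne
      exact Finset.sum_pos' (fun i _ => Complex.normSq_nonneg _)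
        ⟨i, Finset.mem_univ i, Complex.normSq_pos.mpr hi⟩
    set WY : ℂ := ∑ k, ((w k : ℝ) : ℂ) * y k with hWY
    set R : ℝ := Complex.normSq WY + ∑ i, d i * Complex.normSq (y i) with hR
    have hRnn : 0 ≤ R := by
      rw [hR]
      have h5 : 0 ≤ ∑ i, d i * Complex.normSq (y i) :=
        Finset.sum_nonneg fun i _ => mul_nonneg (hdnn i) (Complex.normSq_nonneg _)
      have h6 := Complex.normSq_nonneg WY
      linarith
    have hconjyy : ∀ i : Fin (L+2),
        (starRingEnd ℂ) (y i) * y i = ((Complex.normSq (y i) : ℝ) : ℂ) :=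
      fun i => (Complex.normSq_eq_conj_mul_self).symm
    have hexpand : ∀ i, (∑ k, ((N i k:ℝ):ℂ) * y k)
        = ((w i:ℝ):ℂ) * WY + ((d i:ℝ):ℂ) * y i := by
      intro i
      rw [hWY, Finset.mul_sum]
      rw [Finset.sum_congr rfl (fun k _ => show ((N i k:ℝ):ℂ) * y k
          = ((w i:ℝ):ℂ) * (((w k:ℝ):ℂ) * y k) + (if i = k then ((d i:ℝ):ℂ) * y k else 0) by
        rw [hNapp i k]
        push_cast
        split_ifs <;> push_cast <;> ring), Finset.sum_add_distrib, Finset.sum_ite_eq,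
        if_pos (Finset.mem_univ i)]
    have hQ : (-z0) * (t : ℂ) = (R : ℂ) := by
      have hQ1 : ∑ i, (starRingEnd ℂ) (y i) * (∑ k, ((N i k:ℝ):ℂ) * y k) = (-z0) * (t:ℂ) := by
        rw [ht]
        push_cast
        rw [Finset.mul_sum]
        apply Finset.sum_congr rfl
        intro i _
        rw [hNy i, ← hconjyy i]
        ring
      have hQ2 : ∑ i, (starRingEnd ℂ) (y i) * (∑ k, ((N i k:ℝ):ℂ) * y k) = (R : ℂ) := by
        rw [Finset.sum_congr rfl (fun i _ => by rw [hexpand i]), hR]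
        push_cast
        rw [Finset.sum_congr rfl (fun i _ => show (starRingEnd ℂ) (y i) *
            (((w i:ℝ):ℂ) * WY + ((d i:ℝ):ℂ) * y i)
            = ((w i:ℝ):ℂ) * (starRingEnd ℂ) (y i) * WY
              + ((d i:ℝ):ℂ) * ((starRingEnd ℂ) (y i) * y i) by ring),
          Finset.sum_add_distrib]
        congr 1
        · rw [← Finset.sum_mul]
          have hconjWY : ∑ i, ((w i:ℝ):ℂ) * (starRingEnd ℂ) (y i) = (starRingEnd ℂ) WY := by
            rw [hWY, map_sum]
            apply Finset.sum_congr rfl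
            intro k _
            rw [_root_.map_mul (starRingEnd ℂ) (((w k : ℝ) : ℂ)) (y k), Complex.conj_ofReal]
          rw [hconjWY, ← Complex.normSq_eq_conj_mul_self]
        · apply Finset.sum_congr rfl
          intro i _
          rw [hconjyy i]
      rw [← hQ1, hQ2]
    have htne : (t:ℂ) ≠ 0 := by exact_mod_cast htpos.ne'
    have h3 : z0 * (t:ℂ) = -(R:ℂ) := by linear_combination -hQ
    have hz0val : z0 = ((-(R/t) : ℝ) : ℂ) := by
      calc z0 = -(R:ℂ)/(t:ℂ) := eq_div_of_mul_eq htne h3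
        _ = ((-(R/t):ℝ):ℂ) := by push_cast; ring
    have habs : ‖z0‖ = R / t := by
      rw [hz0val, Complex.norm_real, Real.norm_eq_abs, abs_neg, abs_of_nonneg (div_nonneg hRnn htpos.le)]
    have hWYbd : Complex.normSq WY ≤ Ttot * t := by
      have h4 : ‖WY‖ ≤ ∑ k, w k * ‖y k‖ := by
        rw [hWY]
        refine (norm_sum_le _ _).trans ?_
        apply le_of_eq
        apply Finset.sum_congr rfl
        intro k _
        rw [norm_mul, Complex.norm_real, Real.norm_eq_abs, abs_of_nonneg (hwnn k)]
      have h5 : (∑ k, w k * ‖y k‖)^2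
          ≤ (∑ k, (w k)^2) * (∑ k, (‖y k‖)^2) :=
        Finset.sum_mul_sq_le_sq_mul_sq _ _ _
      have h6 : ∑ k, (‖y k‖)^2 = t := by
        rw [ht]; exact Finset.sum_congr rfl fun k _ => Complex.sq_norm _
      calc Complex.normSq WY = ‖WY‖^2 := (Complex.sq_norm WY).symm
        _ ≤ (∑ k, w k * ‖y k‖)^2 := by
            apply pow_le_pow_left₀ (norm_nonneg _) h4 2
        _ ≤ (∑ k, (w k)^2) * (∑ k, (‖y k‖)^2) := h5
        _ = Ttot * t := by rw [hWtot, h6]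
    have hdbd : ∑ i, d i * Complex.normSq (y i) ≤ θ κ ^2 * t := by
      rw [ht, Finset.mul_sum]
      apply Finset.sum_le_sum
      intro i _
      exact mul_le_mul_of_nonneg_right (hdκ i) (Complex.normSq_nonneg _)
    have hRbd : R ≤ (Ttot + θ κ^2) * t := by rw [hR]; nlinarith
    rw [← hz0abs, habs, div_le_iff₀ htpos]
    calc R ≤ (Ttot + θ κ^2) * t := hRbd
      _ = (θ κ ^ 2 + 1 / (Ju * η) + ∑ ℓ : Fin L, μ ℓ * Υ ℓ) * t := by rw [hsumuv]; ring
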